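/- Suppose Y = T(h*)U for some h* ∈ R_{≥0}^{q+1}, where U satisfies: for all i there exists j with U_{0j} > 0 and (T(h*)U)_{ij} > 0. Then h* is the unique minimizer of h ↦ I(Y||T(h)U) over R_{≥0}^{q+1}, and I(Y||T(h*)U) = 0. Moreover the equation T(h)U = T(h*)U has the unique solution h = h*. -/
import Mathlib


open scoped BigOperators

/-- Csiszár I-divergence between nonnegative matrices, valued in `[0,∞]` (as `EReal`),
with conventions `0·log 0 = 0`, `0/0 = 0` and `p/0 = ∞` for `p > 0`. -/
noncomputable def IdivM {n m : ℕ} (Y Z : Fin n → Fin m → ℝ) : EReal :=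
  ∑ i, ∑ j, if Z i j = 0 ∧ 0 < Y i j then (⊤ : EReal)
    else ((Y i j * Real.log (Y i j / Z i j) - Y i j + Z i j : ℝ) : EReal)

/-- The columnwise convolution `(T(h)U)_{ij} = ∑_{k=0}^{min(i,q)} h_k U_{i-k,j}`. -/
def convM (q N m : ℕ) (h : Fin (q + 1) → ℝ) (U : Fin (N + 1) → Fin m → ℝ) :
    Fin (N + 1) → Fin m → ℝ :=
  fun i j => ∑ k : Fin (q + 1),
    if (k : ℕ) ≤ (i : ℕ) then
      h k * U ⟨(i : ℕ) - (k : ℕ), Nat.lt_of_le_of_lt (Nat.sub_le _ _) i.isLt⟩ j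
    else 0


lemma term_nonneg (x z : ℝ) (hx : 0 ≤ x) (hz : 0 ≤ z) (h : ¬(z = 0 ∧ 0 < x)) :
    0 ≤ x * Real.log (x / z) - x + z := by
  rcases eq_or_lt_of_le hx with rfl | hx'
  · simp [hz]
  · have hz' : 0 < z := by
      rcases eq_or_lt_of_le hz with rfl | hz'
      · exact absurd ⟨rfl, hx'⟩ h
      · exact hz'
    have hlog : Real.log (z / x) ≤ z / x - 1 :=
      Real.log_le_sub_one_of_pos (div_pos hz' hx')
    have e1 : Real.log (x / z) = Real.log x - Real.log z := Real.log_div hx'.ne' hz'.ne'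
    have e2 : Real.log (z / x) = Real.log z - Real.log x := Real.log_div hz'.ne' hx'.ne'
    have h4 : x * Real.log (z / x) ≤ x * (z / x - 1) := by
      exact mul_le_mul_of_nonneg_left hlog hx'.le
    have e3 : x * (z / x - 1) = z - x := by field_simp
    rw [e2, e3] at h4
    rw [e1]
    nlinarith

lemma term_eq_zero (x z : ℝ) (hx : 0 ≤ x) (hz : 0 ≤ z) (h : ¬(z = 0 ∧ 0 < x))
    (heq : x * Real.log (x / z) - x + z = 0) : x = z := by
  rcases eq_or_lt_of_le hx with rfl | hx'
  · simpa using heq.symm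
  · have hz' : 0 < z := by
      rcases eq_or_lt_of_le hz with rfl | hz'
      · exact absurd ⟨rfl, hx'⟩ h
      · exact hz'
    by_contra hne
    have hne1 : z / x ≠ 1 := by
      intro h1
      exact hne ((div_eq_one_iff_eq hx'.ne').mp h1).symm
    have hlog : Real.log (z / x) < z / x - 1 :=
      Real.log_lt_sub_one_of_pos (div_pos hz' hx') hne1
    have e1 : Real.log (x / z) = Real.log x - Real.log z := Real.log_div hx'.ne' hz'.ne'
    have e2 : Real.log (z / x) = Real.log z - Real.log x := Real.log_div hz'.ne' hx'.ne'
    have h4 : x * Real.log (z / x) < x * (z / x - 1) := (mul_lt_mul_iff_right₀ hx').mpr hlog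
    have e3 : x * (z / x - 1) = z - x := by field_simp
    rw [e2, e3] at h4
    rw [e1] at heq
    nlinarith

lemma IdivM_self {n m : ℕ} (Z : Fin n → Fin m → ℝ) : IdivM Z Z = 0 := by
  unfold IdivM
  apply Finset.sum_eq_zero; intro i _
  apply Finset.sum_eq_zero; intro j _
  have hc : ¬(Z i j = 0 ∧ 0 < Z i j) := by
    rintro ⟨h0, h1⟩; rw [h0] at h1; exact lt_irrefl 0 h1
  rw [if_neg hc]
  by_cases hz : Z i j = 0
  · simp [hz]
  · rw [div_self hz, Real.log_one, mul_zero]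
    norm_num

lemma IdivM_nonneg {n m : ℕ} (Y Z : Fin n → Fin m → ℝ) (hY : ∀ i j, 0 ≤ Y i j)
    (hZ : ∀ i j, 0 ≤ Z i j) : 0 ≤ IdivM Y Z := by
  unfold IdivM
  apply Finset.sum_nonneg; intro i _
  apply Finset.sum_nonneg; intro j _
  split_ifs with hc
  · exact le_top
  · exact_mod_cast term_nonneg _ _ (hY i j) (hZ i j) hc

lemma IdivM_eq_zero_imp {n m : ℕ} (Y Z : Fin n → Fin m → ℝ) (hY : ∀ i j, 0 ≤ Y i j)
    (hZ : ∀ i j, 0 ≤ Z i j) (h : IdivM Y Z = 0) : Y = Z := by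
  have hterm : ∀ i j, (if Z i j = 0 ∧ 0 < Y i j then (⊤ : EReal)
      else ((Y i j * Real.log (Y i j / Z i j) - Y i j + Z i j : ℝ) : EReal)) = 0 := by
    have hinner : ∀ i ∈ Finset.univ, (0:EReal) ≤ ∑ j, (if Z i j = 0 ∧ 0 < Y i j then (⊤ : EReal)
        else ((Y i j * Real.log (Y i j / Z i j) - Y i j + Z i j : ℝ) : EReal)) := by
      intro i _
      apply Finset.sum_nonneg; intro j _
      split_ifs with hc
      · exact le_top
      · exact_mod_cast term_nonneg _ _ (hY i j) (hZ i j) hc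
    have h1 := (Finset.sum_eq_zero_iff_of_nonneg hinner).mp h
    intro i j
    have h2 := h1 i (Finset.mem_univ i)
    have hnn : ∀ j ∈ Finset.univ, (0:EReal) ≤ (if Z i j = 0 ∧ 0 < Y i j then (⊤ : EReal)
        else ((Y i j * Real.log (Y i j / Z i j) - Y i j + Z i j : ℝ) : EReal)) := by
      intro j _
      split_ifs with hc
      · exact le_top
      · exact_mod_cast term_nonneg _ _ (hY i j) (hZ i j) hc
    exact (Finset.sum_eq_zero_iff_of_nonneg hnn).mp h2 j (Finset.mem_univ j)
  funext i j
  have := hterm i j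
  split_ifs at this with hc
  · exact absurd this (by simp)
  · have hr : Y i j * Real.log (Y i j / Z i j) - Y i j + Z i j = 0 := by exact_mod_cast this
    exact term_eq_zero _ _ (hY i j) (hZ i j) hc hr

lemma conv_nonneg (q N m : ℕ) (h : Fin (q+1) → ℝ) (U : Fin (N+1) → Fin m → ℝ)
    (hh : ∀ k, 0 ≤ h k) (hU : ∀ i j, 0 ≤ U i j) : ∀ i j, 0 ≤ convM q N m h U i j := by
  intro i j
  apply Finset.sum_nonneg; intro k _
  split_ifs
  · exact mul_nonneg (hh k) (hU _ j)
  · exact le_refl 0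

lemma conv_cancel (q N m : ℕ) (hqN : q ≤ N) (U : Fin (N+1) → Fin m → ℝ)
    (h g : Fin (q+1) → ℝ)
    (hcond : ∀ i : Fin (N + 1), ∃ j : Fin m, 0 < U 0 j)
    (heq : convM q N m h U = convM q N m g U) : h = g := by
  suffices H : ∀ n : ℕ, ∀ hn : n < q + 1, h ⟨n, hn⟩ = g ⟨n, hn⟩ by
    funext k; have := H k k.isLt; simpa using this
  intro n
  induction n using Nat.strong_induction_on with
  | _ n ih =>
  intro hn
  have hiN : n < N + 1 := by omega
  obtain ⟨j, hj⟩ := hcond ⟨n, hiN⟩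
  have hrow := congrFun (congrFun heq ⟨n, hiN⟩) j
  unfold convM at hrow
  have hsum : ∑ k : Fin (q+1),
      ((if (k:ℕ) ≤ n then h k * U ⟨n - (k:ℕ), by omega⟩ j else 0)
       - (if (k:ℕ) ≤ n then g k * U ⟨n - (k:ℕ), by omega⟩ j else 0)) = 0 := by
    rw [Finset.sum_sub_distrib]
    rw [hrow]
    ring
  rw [Finset.sum_eq_single (⟨n, hn⟩ : Fin (q+1))] at hsum
  · simp only [Fin.val_mk, le_refl, if_true, Nat.sub_self, Fin.mk_zero] at hsum
    have : (h ⟨n, hn⟩ - g ⟨n, hn⟩) * U 0 j = 0 := by ring_nf; ring_nf at hsum; linarith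
    rcases mul_eq_zero.mp this with h1 | h2
    · linarith [sub_eq_zero.mp h1]
    · exact absurd h2 hj.ne'
  · intro k _ hk
    by_cases hkn : (k:ℕ) ≤ n
    · have hklt : (k:ℕ) < n := by
        rcases lt_or_eq_of_le hkn with h1 | h1
        · exact h1
        · exact absurd (Fin.ext h1) hk
      have := ih k hklt k.isLt
      simp only [if_pos hkn]
      rw [show (⟨(k:ℕ), k.isLt⟩ : Fin (q+1)) = k from Fin.eta k k.isLt] at this
      rw [this]; ring
    · simp [hkn]
  · intro hmem; exact absurd (Finset.mem_univ _) hmem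

/-- if the data are generated by a true system `Y = T(h*)U`, with
`U_{0j} > 0` and `(T(h*)U)_{ij} > 0` for some `j` for every `i`, then `h*` is the
unique minimizer of `h ↦ I(Y‖T(h)U)` over `ℝ₊^{q+1}`, the minimal value is `0`,
and `T(h)U = T(h*)U` has the unique solution `h = h*`. -/
theorem true_system_unique_minimizer (q N m : ℕ) (hqN : q ≤ N)
    (U : Fin (N + 1) → Fin m → ℝ) (hU : ∀ i j, 0 ≤ U i j)
    (hstar : Fin (q + 1) → ℝ) (hstar_nonneg : ∀ k, 0 ≤ hstar k)
    (Y : Fin (N + 1) → Fin m → ℝ) (hYdef : Y = convM q N m hstar U)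
    (hcond : ∀ i : Fin (N + 1), ∃ j : Fin m, 0 < U 0 j ∧ 0 < convM q N m hstar U i j) :
    IdivM Y (convM q N m hstar U) = 0 ∧
    (∀ h : Fin (q + 1) → ℝ, (∀ k, 0 ≤ h k) →
      IdivM Y (convM q N m hstar U) ≤ IdivM Y (convM q N m h U)) ∧
    (∀ h : Fin (q + 1) → ℝ, (∀ k, 0 ≤ h k) →
      (∀ g : Fin (q + 1) → ℝ, (∀ k, 0 ≤ g k) →
        IdivM Y (convM q N m h U) ≤ IdivM Y (convM q N m g U)) → h = hstar) ∧
    (∀ h : Fin (q + 1) → ℝ, (∀ k, 0 ≤ h k) →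
      convM q N m h U = convM q N m hstar U → h = hstar) := by
  subst hYdef
  set Z := convM q N m hstar U with hZ
  have hZnn : ∀ i j, 0 ≤ Z i j := conv_nonneg q N m hstar U hstar_nonneg hU
  have hcond' : ∀ i : Fin (N + 1), ∃ j : Fin m, 0 < U 0 j := by
    intro i; obtain ⟨j, hj, _⟩ := hcond i; exact ⟨j, hj⟩
  have hself : IdivM Z Z = 0 := IdivM_self Z
  have huniq : ∀ h : Fin (q + 1) → ℝ, (∀ k, 0 ≤ h k) →
      convM q N m h U = Z → h = hstar := by
    intro h hh heq
    exact conv_cancel q N m hqN U h hstar hcond' heq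
  refine ⟨hself, ?_, ?_, huniq⟩
  · intro h hh
    rw [hself]
    exact IdivM_nonneg Z (convM q N m h U) hZnn (conv_nonneg q N m h U hh hU)
  · intro h hh hmin
    have h1 : IdivM Z (convM q N m h U) ≤ 0 := by
      have := hmin hstar hstar_nonneg
      rwa [hself] at this
    have h2 : IdivM Z (convM q N m h U) = 0 :=
      le_antisymm h1 (IdivM_nonneg Z (convM q N m h U) hZnn (conv_nonneg q N m h U hh hU))
    have h3 : Z = convM q N m h U :=
      IdivM_eq_zero_imp Z (convM q N m h U) hZnn (conv_nonneg q N m h U hh hU) h2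
    exact huniq h hh h3.symm
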